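/- For the tetrahedral vectors n̂₁ = e_x, n̂₂ = −(1/3)e_x − (2√2/3)e_z, n̂_{3,4} = −(1/3)e_x + (√2/3)e_z ± √(2/3)e_y, the quantity S_l = Σ_{j=1}^{4} (n_{j,x} + i n_{j,y})^l equals 1 + 3^{-l}[(−1)^l + 2(√7)^l cos(lα)] where e^{iα} = −1/√7 + i√(6/7); in particular S_l ≠ 0 for l = 3 and l = 4, and S_l = 0 for l = 1 and l = 2. -/

import Mathlib

open Complex Finset

theorem tetrahedron_harmonic_sum
    (n : Fin 4 → Fin 3 → ℝ)
    (h1 : n 0 = ![1, 0, 0])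
    (h2 : n 1 = ![-(1/3), 0, -(2 * Real.sqrt 2 / 3)])
    (h3 : n 2 = ![-(1/3), Real.sqrt (2/3), Real.sqrt 2 / 3])
    (h4 : n 3 = ![-(1/3), -Real.sqrt (2/3), Real.sqrt 2 / 3])
    (α : ℝ)
    (hα : Complex.exp (α * I) = -(1 / Real.sqrt 7) + I * Real.sqrt (6/7))
    (S : ℕ → ℂ)
    (hS : ∀ l, S l = ∑ j, ((n j 0 : ℂ) + I * (n j 1)) ^ l) :
    (∀ l : ℕ, S l = 1 + (3 : ℂ) ^ (-(l : ℤ)) *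
        ((-1) ^ l + 2 * (Real.sqrt 7 : ℂ) ^ l * (Real.cos (l * α) : ℂ))) ∧
    S 3 ≠ 0 ∧ S 4 ≠ 0 ∧ S 1 = 0 ∧ S 2 = 0 := by
  -- basic facts about square roots
  have hs0 : ((Real.sqrt 7 : ℝ) : ℂ) ≠ 0 := by
    exact_mod_cast Real.sqrt_ne_zero'.mpr (by norm_num : (0:ℝ) < 7)
  have hs2 : ((Real.sqrt 7 : ℝ) : ℂ) * Real.sqrt 7 = 7 := by
    rw [← Complex.ofReal_mul, Real.mul_self_sqrt (by norm_num : (0:ℝ) ≤ 7)]; norm_num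
  have h6 : ((Real.sqrt 6 : ℝ) : ℂ) * Real.sqrt 6 = 6 := by
    rw [← Complex.ofReal_mul, Real.mul_self_sqrt (by norm_num : (0:ℝ) ≤ 6)]; norm_num
  have h9 : Real.sqrt 9 = 3 := by
    rw [show (9:ℝ) = 3^2 by norm_num, Real.sqrt_sq (by norm_num : (0:ℝ) ≤ 3)]
  have h23 : Real.sqrt (2/3) = Real.sqrt 6 / 3 := by
    rw [show (2/3:ℝ) = 6/9 by norm_num, Real.sqrt_div (by norm_num : (0:ℝ) ≤ 6), h9]
  have h67 : Real.sqrt (6/7) = Real.sqrt 6 / Real.sqrt 7 := by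
    rw [Real.sqrt_div (by norm_num : (0:ℝ) ≤ 6)]
  -- the conjugate exponential
  have hwc : Complex.exp (-(α * I)) = -(1 / Real.sqrt 7) - I * Real.sqrt (6/7) := by
    rw [Complex.exp_neg, hα]
    apply inv_eq_of_mul_eq_one_right
    field_simp
    have hq : ((Real.sqrt (6/7) : ℝ) : ℂ)^2 = 6/7 := by
      rw [← Complex.ofReal_pow, Real.sq_sqrt (by norm_num : (0:ℝ) ≤ 6/7)]; norm_num
    linear_combination (-((Real.sqrt 7 : ℝ) : ℂ)^2 * I^2) * hq - (6/7) * ((Real.sqrt 7 : ℝ) : ℂ)^2 * Complex.I_sq - (1/7) * hs2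
  -- facts used for the special values
  have hb2 : ((Real.sqrt (2/3) : ℝ) : ℂ)^2 = 2/3 := by
    rw [← Complex.ofReal_pow, Real.sq_sqrt (by norm_num : (0:ℝ) ≤ 2/3)]; norm_num
  have hc : (I * ((Real.sqrt (2/3) : ℝ) : ℂ))^2 = -(2/3) := by
    linear_combination I^2 * hb2 + (2/3) * Complex.I_sq
  -- the general formula
  have main : ∀ l : ℕ, S l = 1 + (3 : ℂ) ^ (-(l : ℤ)) *
      ((-1) ^ l + 2 * (Real.sqrt 7 : ℂ) ^ l * (Real.cos (l * α) : ℂ)) := by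
    intro l
    have hcos : Complex.cos ((l:ℂ) * (α:ℝ))
        = (Complex.exp ((α:ℝ) * I) ^ l + Complex.exp (-((α:ℝ) * I)) ^ l) / 2 := by
      rw [eq_div_iff (two_ne_zero), mul_comm, Complex.two_cos,
        show ((l:ℂ) * (α:ℂ)) * I = (l:ℂ) * ((α:ℂ) * I) by ring, Complex.exp_nat_mul,
        show -((l:ℂ) * (α:ℂ)) * I = (l:ℂ) * -((α:ℂ) * I) by ring, Complex.exp_nat_mul]
    rw [hS, Fin.sum_univ_four, h1, h2, h3, h4]
    simp only [Matrix.cons_val_zero, Matrix.cons_val_one, Matrix.head_cons]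
    push_cast
    rw [hcos, hα, hwc]
    rw [show (3:ℂ) ^ (-(l:ℤ)) = ((3:ℂ)⁻¹)^l by
      rw [zpow_neg, zpow_natCast, inv_pow]]
    have EB : ((3:ℂ)⁻¹)^l * (-1)^l = (-(1/3) : ℂ)^l := by
      rw [← mul_pow]; norm_num
    have EC : ((3:ℂ)⁻¹)^l * ((Real.sqrt 7 : ℝ) : ℂ)^l
          * (-(1 / (Real.sqrt 7 : ℝ)) + I * ((Real.sqrt (6/7) : ℝ) : ℂ))^l
        = ((-(1/3) : ℂ) + I * ((Real.sqrt (2/3) : ℝ) : ℂ))^l := by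
      rw [← mul_pow, ← mul_pow]
      congr 1
      rw [h23, h67]
      push_cast
      field_simp
    have ED : ((3:ℂ)⁻¹)^l * ((Real.sqrt 7 : ℝ) : ℂ)^l
          * (-(1 / (Real.sqrt 7 : ℝ)) - I * ((Real.sqrt (6/7) : ℝ) : ℂ))^l
        = ((-(1/3) : ℂ) + I * (-((Real.sqrt (2/3) : ℝ) : ℂ)))^l := by
      rw [← mul_pow, ← mul_pow]
      congr 1
      rw [h23, h67]
      push_cast
      field_simp
      ring_nf
    linear_combination -EB - EC - ED
  -- special values
  have e3 : S 3 = 20/9 := by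
    rw [hS, Fin.sum_univ_four, h1, h2, h3, h4]
    simp only [Matrix.cons_val_zero, Matrix.cons_val_one, Matrix.head_cons]
    push_cast
    linear_combination (-2 : ℂ) * hc
  have e4 : S 4 = 28/27 := by
    rw [hS, Fin.sum_univ_four, h1, h2, h3, h4]
    simp only [Matrix.cons_val_zero, Matrix.cons_val_one, Matrix.head_cons]
    push_cast
    linear_combination (2 * I^2 * ((Real.sqrt (2/3) : ℝ) : ℂ)^2) * hc
  have e1 : S 1 = 0 := by
    rw [hS, Fin.sum_univ_four, h1, h2, h3, h4]
    simp only [Matrix.cons_val_zero, Matrix.cons_val_one, Matrix.head_cons]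
    push_cast
    ring
  have e2 : S 2 = 0 := by
    rw [hS, Fin.sum_univ_four, h1, h2, h3, h4]
    simp only [Matrix.cons_val_zero, Matrix.cons_val_one, Matrix.head_cons]
    push_cast
    linear_combination 2 * hc
  exact ⟨main, by rw [e3]; norm_num, by rw [e4]; norm_num, e1, e2⟩
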